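/- Let $f_k(t) = t - \frac{2}{4-\gamma_k}\left(\frac{4-\gamma_k}{\gamma_k}\right)^{\gamma_k/2} t^{\gamma_k/2}$ with $\gamma_k \in (0,2)$, $\gamma_k \to 2$, and let $t_k = \frac{\gamma_k}{4-\gamma_k}$ be its unique global minimum point. Suppose $(\beta_k)$ is a sequence of positive reals with $\beta_k^2 \to \beta^2$ for some $\beta>0$ and $\lim_{k\to\infty} f_k(\beta_k^2)/f_k(t_k) = 1$. Then $\beta = 1$. -/

import Mathlib

open Filter

private lemma expG_tendsto :
    Tendsto (fun d : ℝ => if d = 0 then 1 else (Real.exp d - 1) / d)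
      (nhds 0) (nhds 1) := by
  have h := hasDerivAt_iff_tendsto_slope.mp (Real.hasDerivAt_exp 0)
  rw [Real.exp_zero] at h
  have h2 : Tendsto (fun d : ℝ => if d = 0 then 1 else (Real.exp d - 1) / d)
      (nhdsWithin 0 {(0:ℝ)}ᶜ) (nhds 1) := by
    refine Tendsto.congr' ?_ h
    filter_upwards [self_mem_nhdsWithin] with d hd
    simp only [Set.mem_compl_iff, Set.mem_singleton_iff] at hd
    simp [slope_def_field, hd, Real.exp_zero]
  rw [← nhdsNE_sup_pure (0:ℝ), tendsto_sup]
  refine ⟨h2, ?_⟩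
  simpa using tendsto_pure_nhds (fun d : ℝ => if d = 0 then 1 else (Real.exp d - 1) / d) 0

private lemma expG_mul (d : ℝ) :
    (if d = 0 then 1 else (Real.exp d - 1) / d) * d = Real.exp d - 1 := by
  by_cases hd : d = 0
  · simp [hd]
  · simp [hd, div_mul_cancel₀ _ hd]

/-- if `β_k² → β²` with `β > 0` and `f_k(β_k²)/f_k(t_k) → 1`, where
`t_k = γ_k/(4-γ_k)` is the unique global minimum point of `f_k`, then `β = 1`. -/
theorem stmt7 (γ : ℕ → ℝ) (hγ : ∀ k, γ k ∈ Set.Ioo (0 : ℝ) 2)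
    (hγlim : Tendsto γ atTop (nhds 2))
    (f : ℕ → ℝ → ℝ)
    (hf : ∀ k t, f k t =
      t - 2 / (4 - γ k) * ((4 - γ k) / γ k) ^ (γ k / 2) * t ^ (γ k / 2))
    (β : ℝ) (hβ : 0 < β) (βseq : ℕ → ℝ) (hβseq : ∀ k, 0 < βseq k)
    (hβlim : Tendsto (fun k => (βseq k) ^ 2) atTop (nhds (β ^ 2)))
    (hratio : Tendsto (fun k => f k ((βseq k) ^ 2) / f k (γ k / (4 - γ k)))
      atTop (nhds 1)) :
    β = 1 := by
  set G : ℝ → ℝ := fun d => if d = 0 then 1 else (Real.exp d - 1) / d with hGdef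
  set s : ℕ → ℝ := fun k => (βseq k) ^ 2 with hsdef
  set L : ℝ := β ^ 2 with hLdef
  have hL : 0 < L := pow_pos hβ 2
  have hs : ∀ k, 0 < s k := fun k => pow_pos (hβseq k) 2
  have h0 : ∀ k, 0 < γ k := fun k => (hγ k).1
  have h2 : ∀ k, γ k < 2 := fun k => (hγ k).2
  have h4 : ∀ k, 0 < 4 - γ k := fun k => by have := h2 k; linarith
  have hxne : ∀ k, γ k - 2 ≠ 0 := fun k => sub_ne_zero.mpr (h2 k).ne
  -- the auxiliary exponent
  set h : ℕ → ℝ := fun k => γ k / 2 * (Real.log ((4 - γ k) / γ k) + Real.log (s k)) with hhdef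
  set d : ℕ → ℝ := fun k => Real.log (s k) - h k with hddef
  -- key pointwise algebraic identity
  have key : ∀ k, f k (s k) / f k (γ k / (4 - γ k)) =
      -(s k) + 2 * ((s k - Real.exp (h k)) / (γ k - 2)) := by
    intro k
    have hA : (0:ℝ) < (4 - γ k) / γ k := div_pos (h4 k) (h0 k)
    have hprod : ((4 - γ k) / γ k) ^ (γ k / 2) * (γ k / (4 - γ k)) ^ (γ k / 2) = 1 := by
      rw [← Real.mul_rpow hA.le (le_of_lt (div_pos (h0 k) (h4 k)))]
      rw [show (4 - γ k) / γ k * (γ k / (4 - γ k)) = 1 by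
        field_simp [(h0 k).ne', (h4 k).ne']]
      exact Real.one_rpow _
    have hnum : ((4 - γ k) / γ k) ^ (γ k / 2) * (s k) ^ (γ k / 2) = Real.exp (h k) := by
      rw [Real.rpow_def_of_pos hA, Real.rpow_def_of_pos (hs k), ← Real.exp_add]
      simp only [hhdef]
      congr 1
      ring
    rw [hf, hf]
    rw [mul_assoc, mul_assoc, hprod, hnum, mul_one]
    rw [show γ k / (4 - γ k) - 2 / (4 - γ k) = (γ k - 2) / (4 - γ k) by
      rw [div_sub_div_same]]
    field_simp [hxne k, (h4 k).ne']
    ring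
  -- basic limits
  have hsL : Tendsto s atTop (nhds L) := hβlim
  have hlogs : Tendsto (fun k => Real.log (s k)) atTop (nhds (Real.log L)) :=
    (Real.continuousAt_log hL.ne').tendsto.comp hsL
  have hx : Tendsto (fun k => γ k - 2) atTop (nhds 0) := by
    simpa using hγlim.sub (tendsto_const_nhds (x := (2:ℝ)))
  have hA1 : Tendsto (fun k => (4 - γ k) / γ k) atTop (nhds 1) := by
    have := ((tendsto_const_nhds (x := (4:ℝ))).sub hγlim).div hγlim (by norm_num)
    norm_num at this
    exact this
  have hlogA : Tendsto (fun k => Real.log ((4 - γ k) / γ k)) atTop (nhds 0) := by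
    have := (Real.continuousAt_log one_ne_zero).tendsto.comp hA1
    simpa [Function.comp_def] using this
  have hγ2 : Tendsto (fun k => γ k / 2) atTop (nhds 1) := by
    have := hγlim.div_const 2
    norm_num at this
    exact this
  -- limit of h
  have hh : Tendsto h atTop (nhds (Real.log L)) := by
    have := hγ2.mul (hlogA.add hlogs)
    simpa using this
  have hexph : Tendsto (fun k => Real.exp (h k)) atTop (nhds L) := by
    have := Real.continuous_exp.continuousAt.tendsto.comp hh
    simpa [Real.exp_log hL, Function.comp_def] using this
  -- limit of log((4-γ)/γ)/(γ-2) : derivative argument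
  have hq : Tendsto (fun k => Real.log ((4 - γ k) / γ k) / (γ k - 2)) atTop (nhds (-1)) := by
    set F : ℝ → ℝ := fun x => Real.log ((2 - x) / (2 + x)) with hFdef
    have hg : HasDerivAt (fun x : ℝ => (2 - x) / (2 + x)) (-1) 0 := by
      have h1 : HasDerivAt (fun x : ℝ => 2 - x) (-1) 0 := by
        simpa using (hasDerivAt_id (0:ℝ)).const_sub 2
      have h2' : HasDerivAt (fun x : ℝ => 2 + x) 1 0 := by
        simpa using (hasDerivAt_id (0:ℝ)).const_add 2
      have := h1.div h2' (by norm_num)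
      norm_num at this
      exact this
    have hF : HasDerivAt F (-1) 0 := by
      have := hg.log (by norm_num)
      norm_num at this
      exact this
    have hslope := hasDerivAt_iff_tendsto_slope.mp hF
    have hxmem : Tendsto (fun k => γ k - 2) atTop (nhdsWithin 0 {(0:ℝ)}ᶜ) :=
      tendsto_nhdsWithin_of_tendsto_nhds_of_eventually_within _ hx
        (Eventually.of_forall fun k => by simpa using hxne k)
    have hcomp := hslope.comp hxmem
    refine hcomp.congr fun k => ?_
    have e1 : (2:ℝ) - (γ k - 2) = 4 - γ k := by ring
    have e2 : (2:ℝ) + (γ k - 2) = γ k := by ring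
    simp only [Function.comp, slope_def_field, hFdef, e1, e2, sub_zero]
    norm_num [Real.log_one]
  -- limit of d/(γ-2)
  have hdq : Tendsto (fun k => d k / (γ k - 2)) atTop
      (nhds (1 - Real.log L / 2)) := by
    have heq : ∀ k, d k / (γ k - 2) =
        -(1/2) * Real.log (s k) - γ k / 2 * (Real.log ((4 - γ k) / γ k) / (γ k - 2)) := by
      intro k
      rw [hddef]
      simp only [hhdef]
      field_simp [hxne k]
      ring
    refine Tendsto.congr (fun k => (heq k).symm) ?_
    have := ((hlogs.const_mul (-(1/2:ℝ)))).sub (hγ2.mul hq)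
    have hval : -(1/2) * Real.log L - 1 * (-1) = 1 - Real.log L / 2 := by ring
    rw [hval] at this
    exact this
  -- d → 0
  have hd0 : Tendsto d atTop (nhds 0) := by
    have := hdq.mul hx
    simp only [mul_zero] at this
    refine Tendsto.congr (fun k => ?_) this
    exact div_mul_cancel₀ _ (hxne k)
  -- G(d) → 1
  have hGd : Tendsto (fun k => G (d k)) atTop (nhds 1) := expG_tendsto.comp hd0
  -- main term limit
  have hmt : Tendsto (fun k => (s k - Real.exp (h k)) / (γ k - 2)) atTop
      (nhds (L * 1 * (1 - Real.log L / 2))) := by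
    have heq : ∀ k, (s k - Real.exp (h k)) / (γ k - 2) =
        Real.exp (h k) * G (d k) * (d k / (γ k - 2)) := by
      intro k
      have hsk : s k = Real.exp (h k) * Real.exp (d k) := by
        rw [← Real.exp_add, hddef]
        simp [Real.exp_log (hs k)]
      have hgd : G (d k) * d k = Real.exp (d k) - 1 := expG_mul (d k)
      rw [hsk]
      rw [show Real.exp (h k) * Real.exp (d k) - Real.exp (h k)
            = Real.exp (h k) * (G (d k) * d k) by rw [hgd]; ring]
      ring
    refine Tendsto.congr (fun k => (heq k).symm) ?_
    exact (hexph.mul hGd).mul hdq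
  -- ratio limit
  have hfinal : Tendsto (fun k => f k ((βseq k) ^ 2) / f k (γ k / (4 - γ k))) atTop
      (nhds (L - L * Real.log L)) := by
    have := (hsL.neg).add (hmt.const_mul 2)
    have hval : -L + 2 * (L * 1 * (1 - Real.log L / 2)) = L - L * Real.log L := by ring
    rw [hval] at this
    exact Tendsto.congr (fun k => (key k).symm) this
  have huniq : L - L * Real.log L = 1 := tendsto_nhds_unique hfinal hratio
  -- conclude L = 1
  have hL1 : L = 1 := by
    by_contra hne
    have hinv : Real.log L⁻¹ < L⁻¹ - 1 :=
      Real.log_lt_sub_one_of_pos (by positivity) (by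
        simp only [ne_eq, inv_eq_one]; exact hne)
    rw [Real.log_inv] at hinv
    have h3 := mul_lt_mul_of_pos_left hinv hL
    rw [mul_sub, mul_inv_cancel₀ hL.ne'] at h3
    nlinarith
  have : (β - 1) * (β + 1) = 0 := by
    have : β ^ 2 = 1 := hL1
    nlinarith
  rcases mul_eq_zero.mp this with h' | h'
  · linarith
  · linarith
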